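/- For k₁, k₂ > 0, p ∈ (0,1), q > 1, the origin of the scalar system ẋ = −k₁⌊x⌉^p − k₂⌊x⌉^q is fixed-time stable: every solution with any initial condition x₀ ∈ ℝ reaches 0 in a time bounded by T_max = 1/(k₁(1−p)) + 1/(k₂(q−1)), independent of x₀. -/

import Mathlib

open Set
lemma mvt_le (f f' : ℝ → ℝ) (a b C : ℝ) (hab : a ≤ b)
    (hf : ∀ t ∈ Set.Icc a b, HasDerivAt f (f' t) t)
    (hC : ∀ t ∈ Set.Icc a b, f' t ≤ C) : f b - f a ≤ C * (b - a) := by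
  have hd : ∀ t ∈ Set.Icc a b, HasDerivAt (fun s => C * s - f s) (C - f' t) t := by
    intro t ht
    have h := ((hasDerivAt_id t).const_mul C).sub (hf t ht)
    rw [mul_one] at h
    exact h
  have hmono : MonotoneOn (fun t => C * t - f t) (Set.Icc a b) := by
    apply monotoneOn_of_deriv_nonneg (convex_Icc a b)
    · exact fun t ht => ((hd t ht).continuousAt).continuousWithinAt
    · intro t ht
      rw [interior_Icc] at ht
      exact (hd t (Set.mem_Icc_of_Ioo ht)).differentiableAt.differentiableWithinAt
    · intro t ht
      rw [interior_Icc] at ht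
      rw [(hd t (Set.mem_Icc_of_Ioo ht)).deriv]
      have := hC t (Set.mem_Icc_of_Ioo ht)
      linarith
  have := hmono (Set.left_mem_Icc.2 hab) (Set.right_mem_Icc.2 hab) hab
  simp only at this
  nlinarith [this]

lemma mvt_ge (f f' : ℝ → ℝ) (a b C : ℝ) (hab : a ≤ b)
    (hf : ∀ t ∈ Set.Icc a b, HasDerivAt f (f' t) t)
    (hC : ∀ t ∈ Set.Icc a b, C ≤ f' t) : C * (b - a) ≤ f b - f a := by
  have := mvt_le (fun t => -f t) (fun t => -f' t) a b (-C) hab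
    (fun t ht => (hf t ht).neg) (fun t ht => by simpa using neg_le_neg (hC t ht))
  linarith

theorem fixed_time_convergence_ode (k₁ k₂ p q : ℝ) (hk₁ : 0 < k₁) (hk₂ : 0 < k₂)
    (hp : p ∈ Set.Ioo (0:ℝ) 1) (hq : 1 < q) (x : ℝ → ℝ) (x₀ : ℝ) (hx0 : x 0 = x₀)
    (hode : ∀ t, 0 ≤ t → HasDerivAt x
      (-(k₁ * |x t| ^ p * Real.sign (x t)) - k₂ * |x t| ^ q * Real.sign (x t)) t) :
    ∀ t, 1 / (k₁ * (1 - p)) + 1 / (k₂ * (q - 1)) ≤ t → x t = 0 := by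
  obtain ⟨hp0, hp1⟩ := hp
  set g : ℝ → ℝ := fun s => x s * x s with hgdef
  set G' : ℝ → ℝ := fun s => -(2 * k₁ * |x s| ^ (p+1)) - 2 * k₂ * |x s| ^ (q+1) with hG'def
  -- derivative of g
  have hsgn : ∀ s, x s * Real.sign (x s) = |x s| := by
    intro s
    rcases lt_trichotomy (x s) 0 with h | h | h
    · rw [Real.sign_of_neg h, abs_of_neg h]; ring
    · simp [h]
    · rw [Real.sign_of_pos h, abs_of_pos h]; ring
  have hg : ∀ t, 0 ≤ t → HasDerivAt g (G' t) t := by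
    intro t ht
    have h1 := (hode t ht).mul (hode t ht)
    have heq : (-(k₁ * |x t| ^ p * Real.sign (x t)) - k₂ * |x t| ^ q * Real.sign (x t)) * x t
        + x t * (-(k₁ * |x t| ^ p * Real.sign (x t)) - k₂ * |x t| ^ q * Real.sign (x t)) = G' t := by
      rcases eq_or_ne (x t) 0 with h0 | h0
      · simp [hG'def, h0, Real.zero_rpow (by linarith : p + 1 ≠ 0),
          Real.zero_rpow (by linarith : q + 1 ≠ 0)]
      · have ha : |x t| ≠ 0 := abs_ne_zero.2 h0
        have e1 : |x t| ^ (p+1) = |x t| ^ p * |x t| := Real.rpow_add_one ha p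
        have e2 : |x t| ^ (q+1) = |x t| ^ q * |x t| := Real.rpow_add_one ha q
        have := hsgn t
        simp only [hG'def]
        rw [e1, e2]
        linear_combination (-(2*k₁*|x t| ^ p) - 2*k₂*|x t| ^ q) * this
    rw [heq] at h1
    exact h1
  -- g nonneg
  have hgnn : ∀ s, 0 ≤ g s := fun s => mul_self_nonneg _
  -- G' nonpos
  have hG'np : ∀ s, G' s ≤ 0 := by
    intro s
    have h1 : (0:ℝ) ≤ |x s| ^ (p+1) := Real.rpow_nonneg (abs_nonneg _) _
    have h2 : (0:ℝ) ≤ |x s| ^ (q+1) := Real.rpow_nonneg (abs_nonneg _) _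
    simp only [hG'def]
    nlinarith
  -- g antitone on [0, ∞): for 0 ≤ s ≤ t, g t ≤ g s, via mvt_le with C = 0
  have hanti : ∀ s t : ℝ, 0 ≤ s → s ≤ t → g t ≤ g s := by
    intro s t hs hst
    have := mvt_le g G' s t 0 hst
      (fun u hu => hg u (le_trans hs hu.1)) (fun u hu => hG'np u)
    linarith
  -- |x|^2 as g
  have habs : ∀ s r : ℝ, |x s| ^ r = g s ^ (r/2) := by
    intro s r
    simp only [hgdef]
    have h2 : x s * x s = |x s| ^ ((2:ℕ):ℝ) := by
      rw [Real.rpow_natCast, pow_two, abs_mul_abs_self]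
    rw [h2, ← Real.rpow_mul (abs_nonneg _)]
    congr 1
    push_cast
    ring
  -- time constants
  set T₁ : ℝ := 1 / (k₂ * (q - 1)) with hT₁def
  set T₂ : ℝ := 1 / (k₁ * (1 - p)) with hT₂def
  have hC₁ : 0 < k₂ * (q - 1) := mul_pos hk₂ (by linarith)
  have hC₂ : 0 < k₁ * (1 - p) := mul_pos hk₁ (by linarith)
  have hT₁pos : 0 < T₁ := one_div_pos.2 hC₁
  have hT₂pos : 0 < T₂ := one_div_pos.2 hC₂
  set T : ℝ := T₂ + T₁ with hTdef
  -- Claim A : g T₁ ≤ 1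
  have claimA : g T₁ ≤ 1 := by
    by_contra hA
    push_neg at hA
    have hgt : ∀ u ∈ Set.Icc 0 T₁, 1 < g u := fun u hu =>
      lt_of_lt_of_le hA (hanti u T₁ hu.1 hu.2)
    set c : ℝ := (1 - q) / 2 with hcdef
    have hc : c < 0 := by rw [hcdef]; linarith
    set m : ℝ → ℝ := fun s => g s ^ c with hmdef
    have hm : ∀ u ∈ Set.Icc 0 T₁, HasDerivAt m (G' u * c * g u ^ (c - 1)) u := by
      intro u hu
      exact (hg u hu.1).rpow_const (Or.inl (ne_of_gt (lt_trans one_pos (hgt u hu))))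
    have hbound : ∀ u ∈ Set.Icc 0 T₁, k₂ * (q - 1) ≤ G' u * c * g u ^ (c - 1) := by
      intro u hu
      have hgu : (0:ℝ) < g u := lt_trans one_pos (hgt u hu)
      have hpow : (0:ℝ) < g u ^ (c - 1) := Real.rpow_pos_of_pos hgu _
      have h1 : (0:ℝ) ≤ |x u| ^ (p + 1) := Real.rpow_nonneg (abs_nonneg _) _
      have hGle : G' u ≤ -(2 * k₂ * g u ^ ((q + 1) / 2)) := by
        have := habs u (q + 1)
        simp only [hG'def]
        rw [← this]
        nlinarith
      have hmul : g u ^ ((q + 1) / 2) * g u ^ (c - 1) = 1 := by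
        rw [← Real.rpow_add hgu]
        rw [show (q + 1) / 2 + (c - 1) = 0 by rw [hcdef]; ring]
        exact Real.rpow_zero _
      have h2 : c * (-(2 * k₂ * g u ^ ((q + 1) / 2))) * g u ^ (c - 1)
          ≤ c * G' u * g u ^ (c - 1) :=
        mul_le_mul_of_nonneg_right (mul_le_mul_of_nonpos_left hGle (le_of_lt hc))
          (le_of_lt hpow)
      calc k₂ * (q - 1) = c * (-(2 * k₂ * g u ^ ((q + 1) / 2))) * g u ^ (c - 1) := by
            rw [show c * (-(2 * k₂ * g u ^ ((q + 1) / 2))) * g u ^ (c - 1)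
                = -2 * k₂ * c * (g u ^ ((q + 1) / 2) * g u ^ (c - 1)) from by ring,
              hmul, hcdef]
            ring
        _ ≤ c * G' u * g u ^ (c - 1) := h2
        _ = G' u * c * g u ^ (c - 1) := by ring
    have hmvt := mvt_ge m (fun u => G' u * c * g u ^ (c - 1)) 0 T₁ (k₂ * (q - 1))
      (le_of_lt hT₁pos) hm hbound
    have hCT : k₂ * (q - 1) * (T₁ - 0) = 1 := by
      rw [hT₁def, sub_zero]; exact mul_one_div_cancel hC₁.ne'
    have hm0 : 0 < m 0 :=
      Real.rpow_pos_of_pos (lt_trans one_pos (hgt 0 ⟨le_refl _, le_of_lt hT₁pos⟩)) _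
    have hmT : m T₁ < 1 := Real.rpow_lt_one_of_one_lt_of_neg hA hc
    rw [hCT] at hmvt
    linarith
  -- Claim B : g T = 0
  have hT₁T : T₁ ≤ T := by rw [hTdef]; linarith
  have claimB : g T = 0 := by
    by_contra hB
    have hgT : 0 < g T := (hgnn T).lt_of_ne (Ne.symm hB)
    have hgt : ∀ u ∈ Set.Icc T₁ T, 0 < g u := fun u hu =>
      lt_of_lt_of_le hgT (hanti u T (le_trans (le_of_lt hT₁pos) hu.1) hu.2)
    set d : ℝ := (1 - p) / 2 with hddef
    have hd : 0 < d := by rw [hddef]; linarith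
    set m : ℝ → ℝ := fun s => g s ^ d with hmdef
    have hm : ∀ u ∈ Set.Icc T₁ T, HasDerivAt m (G' u * d * g u ^ (d - 1)) u := by
      intro u hu
      exact (hg u (le_trans (le_of_lt hT₁pos) hu.1)).rpow_const (Or.inl (ne_of_gt (hgt u hu)))
    have hbound : ∀ u ∈ Set.Icc T₁ T, G' u * d * g u ^ (d - 1) ≤ -(k₁ * (1 - p)) := by
      intro u hu
      have hgu : (0:ℝ) < g u := hgt u hu
      have hpow : (0:ℝ) < g u ^ (d - 1) := Real.rpow_pos_of_pos hgu _
      have h1 : (0:ℝ) ≤ |x u| ^ (q + 1) := Real.rpow_nonneg (abs_nonneg _) _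
      have hGle : G' u ≤ -(2 * k₁ * g u ^ ((p + 1) / 2)) := by
        have := habs u (p + 1)
        simp only [hG'def]
        rw [← this]
        nlinarith
      have hmul : g u ^ ((p + 1) / 2) * g u ^ (d - 1) = 1 := by
        rw [← Real.rpow_add hgu]
        rw [show (p + 1) / 2 + (d - 1) = 0 by rw [hddef]; ring]
        exact Real.rpow_zero _
      have h2 : G' u * d * g u ^ (d - 1)
          ≤ -(2 * k₁ * g u ^ ((p + 1) / 2)) * d * g u ^ (d - 1) :=
        mul_le_mul_of_nonneg_right (mul_le_mul_of_nonneg_right hGle (le_of_lt hd))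
          (le_of_lt hpow)
      calc G' u * d * g u ^ (d - 1)
          ≤ -(2 * k₁ * g u ^ ((p + 1) / 2)) * d * g u ^ (d - 1) := h2
        _ = -(k₁ * (1 - p)) := by
            rw [show -(2 * k₁ * g u ^ ((p + 1) / 2)) * d * g u ^ (d - 1)
                = -2 * k₁ * d * (g u ^ ((p + 1) / 2) * g u ^ (d - 1)) from by ring,
              hmul, hddef]
            ring
    have hmvt := mvt_le m (fun u => G' u * d * g u ^ (d - 1)) T₁ T (-(k₁ * (1 - p)))
      hT₁T hm hbound
    have hCT : -(k₁ * (1 - p)) * (T - T₁) = -1 := by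
      rw [hTdef, hT₂def]; field_simp; ring
    rw [hCT] at hmvt
    have hmT₁ : m T₁ ≤ 1 := Real.rpow_le_one (hgnn T₁) claimA (le_of_lt hd)
    have hmT : 0 < m T := Real.rpow_pos_of_pos hgT _
    linarith
  -- conclusion
  intro t ht
  have hTt : T ≤ t := by rw [hTdef, hT₂def, hT₁def]; linarith
  have h1 : g t ≤ 0 := by
    rw [← claimB]
    exact hanti T t (by linarith [hT₁pos, hT₂pos]) hTt
  have h2 : g t = 0 := le_antisymm h1 (hgnn t)
  exact mul_self_eq_zero.1 h2
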